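/- Suppose there exist simple 4-(17,5,3), 4-(17,6,12), 4-(17,7,6), 4-(17,8,85), 4-(17,9,153) and 4-(17,10,612) designs, and simple 4-(18,5,2), 4-(18,6,11), 4-(18,7,28), 4-(18,8,70), 4-(18,9,238) and 4-(18,10,357) designs. Then there exists a simple 4-(35, 10, 63903) design (note 63903 = 3043 × 21). -/
import Mathlib


/-- `SimpleDesignExists t v k lam` asserts the existence of a simple
`t-(v, k, lam)` design: a `v`-set `X` together with a set `B` of distinct
`k`-element subsets of `X` (blocks) such that every `t`-element subset of `X`
is contained in exactly `lam` blocks. -/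
def SimpleDesignExists (t v k lam : ℕ) : Prop :=
  ∃ (X : Finset ℕ) (B : Finset (Finset ℕ)),
    X.card = v ∧
    (∀ b ∈ B, b ⊆ X ∧ b.card = k) ∧
    (∀ T ⊆ X, T.card = t → (B.filter (fun b => T ⊆ b)).card = lam)

open Finset

lemma card_filter_supset (Z T : Finset ℕ) (m : ℕ) (hTZ : T ⊆ Z) (hm : T.card ≤ m) :
    ((Z.powersetCard m).filter (fun S => T ⊆ S)).card = (Z.card - T.card).choose (m - T.card) := by
  rw [← card_sdiff_of_subset hTZ, ← Finset.card_powersetCard]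
  apply Finset.card_bij' (fun S _ => S \ T) (fun R _ => R ∪ T)
  · intro S hS
    simp only [mem_filter, mem_powersetCard] at hS
    rw [mem_powersetCard]
    refine ⟨fun x hx => ?_, ?_⟩
    · simp only [mem_sdiff] at hx ⊢
      exact ⟨hS.1.1 hx.1, hx.2⟩
    · rw [card_sdiff_of_subset hS.2, hS.1.2]
  · intro R hR
    rw [mem_powersetCard] at hR
    have hdisj : Disjoint R T := fun s hsR hsT x hx => by
      have := hR.1 (hsR hx); simp only [mem_sdiff] at this
      exact absurd (hsT hx) this.2
    simp only [mem_filter, mem_powersetCard]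
    refine ⟨⟨union_subset (hR.1.trans sdiff_subset) hTZ, ?_⟩, subset_union_right⟩
    rw [card_union_of_disjoint hdisj, hR.2]
    omega
  · intro S hS
    simp only [mem_filter] at hS
    exact sdiff_union_of_subset hS.2
  · intro R hR
    rw [mem_powersetCard] at hR
    have hdisj : Disjoint R T := fun s hsR hsT x hx => by
      have := hR.1 (hsR hx); simp only [mem_sdiff] at this
      exact absurd (hsT hx) this.2
    exact union_sdiff_cancel_right hdisj


lemma count_zero (B : Finset (Finset ℕ)) (k : ℕ) (hB : ∀ b ∈ B, b.card = k)
    (T : Finset ℕ) (hT : k < T.card) :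
    (B.filter (fun b => T ⊆ b)).card = 0 := by
  rw [Finset.card_eq_zero, Finset.filter_eq_empty_iff]
  intro b hb hTb
  have := Finset.card_le_card hTb
  rw [hB b hb] at this
  omega

lemma strength (Y : Finset ℕ) (B : Finset (Finset ℕ)) (v k lam : ℕ)
    (hY : Y.card = v) (hB : ∀ b ∈ B, b ⊆ Y ∧ b.card = k)
    (hdes : ∀ S ⊆ Y, S.card = 4 → (B.filter (fun b => S ⊆ b)).card = lam)
    (j : ℕ) (hj : j ≤ 4) (hjk : j ≤ k) (T : Finset ℕ) (hTY : T ⊆ Y) (hT : T.card = j) :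
    (B.filter (fun b => T ⊆ b)).card * (k - j).choose (4 - j)
      = lam * (v - j).choose (4 - j) := by
  classical
  set SS := (Y.powersetCard 4).filter (fun S => T ⊆ S) with hSS
  have hSScard : SS.card = (v - j).choose (4 - j) := by
    rw [hSS, card_filter_supset Y T 4 hTY (by omega), hY, hT]
  have key : ∑ S ∈ SS, (B.filter (fun b => S ⊆ b)).card
      = ∑ b ∈ B, (SS.filter (fun S => S ⊆ b)).card := by
    simp only [Finset.card_filter]
    rw [Finset.sum_comm]
  have lhs : ∑ S ∈ SS, (B.filter (fun b => S ⊆ b)).card = (v - j).choose (4 - j) * lam := by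
    have hconst : ∀ S ∈ SS, (B.filter (fun b => S ⊆ b)).card = lam := by
      intro S hS
      simp only [hSS, mem_filter, mem_powersetCard] at hS
      exact hdes S hS.1.1 hS.1.2
    rw [Finset.sum_congr rfl hconst, Finset.sum_const, smul_eq_mul, hSScard]
  have rhs : ∑ b ∈ B, (SS.filter (fun S => S ⊆ b)).card
      = (B.filter (fun b => T ⊆ b)).card * (k - j).choose (4 - j) := by
    rw [Finset.card_filter (fun b => T ⊆ b), Finset.sum_mul]
    apply Finset.sum_congr rfl
    intro b hb
    by_cases hTb : T ⊆ b
    · have : SS.filter (fun S => S ⊆ b) = (b.powersetCard 4).filter (fun S => T ⊆ S) := by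
        ext S
        simp only [hSS, mem_filter, mem_powersetCard]
        constructor
        · rintro ⟨⟨⟨hSY, hc⟩, hTS⟩, hSb⟩
          exact ⟨⟨hSb, hc⟩, hTS⟩
        · rintro ⟨⟨hSb, hc⟩, hTS⟩
          exact ⟨⟨⟨hSb.trans (hB b hb).1, hc⟩, hTS⟩, hSb⟩
      rw [this, card_filter_supset b T 4 hTb (by omega), (hB b hb).2, hT, if_pos hTb, one_mul]
    · rw [if_neg hTb, zero_mul, Finset.card_eq_zero, Finset.filter_eq_empty_iff]
      intro S hS hSb
      simp only [hSS, mem_filter] at hS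
      exact hTb (hS.2.trans hSb)
  calc (B.filter (fun b => T ⊆ b)).card * (k - j).choose (4 - j)
      = ∑ b ∈ B, (SS.filter (fun S => S ⊆ b)).card := rhs.symm
    _ = ∑ S ∈ SS, (B.filter (fun b => S ⊆ b)).card := key.symm
    _ = (v - j).choose (4 - j) * lam := lhs
    _ = lam * (v - j).choose (4 - j) := mul_comm _ _


lemma combine (X1 X2 : Finset ℕ) (hd : Disjoint X1 X2) (n : ℕ)
    (A C : ℕ → Finset (Finset ℕ))
    (hA : ∀ i, ∀ b ∈ A i, b ⊆ X1 ∧ b.card = i)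
    (hC : ∀ i, ∀ b ∈ C i, b ⊆ X2)
    (T : Finset ℕ) (hT : T ⊆ X1 ∪ X2) :
    ((((Finset.range (n+1)).biUnion
        (fun i => ((A i) ×ˢ (C i)).image (fun p => p.1 ∪ p.2))).filter
      (fun b => T ⊆ b)).card)
    = ∑ i ∈ Finset.range (n+1),
        ((A i).filter (fun b => T ∩ X1 ⊆ b)).card *
        ((C i).filter (fun b => T ∩ X2 ⊆ b)).card := by
  classical
  have hcapX1 : ∀ i, ∀ p ∈ (A i) ×ˢ (C i), ((p.1 ∪ p.2) ∩ X1) = p.1 := by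
    rintro i ⟨b1, b2⟩ hp
    rw [Finset.mem_product] at hp
    have hb1 := (hA i b1 hp.1).1
    have hb2 := hC i b2 hp.2
    ext x
    simp only [Finset.mem_inter, Finset.mem_union]
    constructor
    · rintro ⟨h | h, hx1⟩
      · exact h
      · exact absurd (hb2 h) (Finset.disjoint_left.mp hd hx1)
    · intro h
      exact ⟨Or.inl h, hb1 h⟩
  have hcapX2 : ∀ i, ∀ p ∈ (A i) ×ˢ (C i), ((p.1 ∪ p.2) ∩ X2) = p.2 := by
    rintro i ⟨b1, b2⟩ hp
    rw [Finset.mem_product] at hp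
    have hb1 := (hA i b1 hp.1).1
    have hb2 := hC i b2 hp.2
    ext x
    simp only [Finset.mem_inter, Finset.mem_union]
    constructor
    · rintro ⟨h | h, hx2⟩
      · exact absurd hx2 (Finset.disjoint_left.mp hd (hb1 h))
      · exact h
    · intro h
      exact ⟨Or.inr h, hb2 h⟩
  rw [Finset.filter_biUnion]
  rw [Finset.card_biUnion]
  · apply Finset.sum_congr rfl
    intro i _
    -- per-index count
    have hpred : ∀ p ∈ (A i) ×ˢ (C i), (T ⊆ p.1 ∪ p.2 ↔ T ∩ X1 ⊆ p.1 ∧ T ∩ X2 ⊆ p.2) := by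
      rintro ⟨b1, b2⟩ hp
      rw [Finset.mem_product] at hp
      have hb1 := (hA i b1 hp.1).1
      have hb2 := hC i b2 hp.2
      constructor
      · intro hTb
        constructor
        · intro x hx
          rw [Finset.mem_inter] at hx
          rcases Finset.mem_union.mp (hTb hx.1) with h | h
          · exact h
          · exact absurd (hb2 h) (Finset.disjoint_left.mp hd hx.2)
        · intro x hx
          rw [Finset.mem_inter] at hx
          rcases Finset.mem_union.mp (hTb hx.1) with h | h
          · exact absurd hx.2 (Finset.disjoint_left.mp hd (hb1 h))
          · exact h
      · rintro ⟨h1, h2⟩ x hx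
        rcases Finset.mem_union.mp (hT hx) with h | h
        · exact Finset.mem_union_left _ (h1 (Finset.mem_inter.mpr ⟨hx, h⟩))
        · exact Finset.mem_union_right _ (h2 (Finset.mem_inter.mpr ⟨hx, h⟩))
    calc #(Finset.filter (fun b => T ⊆ b) (((A i) ×ˢ (C i)).image (fun p => p.1 ∪ p.2)))
        = #((((A i) ×ˢ (C i)).filter (fun p => T ⊆ p.1 ∪ p.2)).image (fun p => p.1 ∪ p.2)) := by
          rw [Finset.filter_image]
      _ = #(((A i) ×ˢ (C i)).filter (fun p => T ⊆ p.1 ∪ p.2)) := Finset.card_image_of_injOn (by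
            intro p hp q hq hpq
            simp only [Finset.coe_filter, Set.mem_setOf_eq] at hp hq
            have h1 : p.1 = q.1 := by rw [← hcapX1 i p hp.1, ← hcapX1 i q hq.1]; simp only at hpq; rw [hpq]
            have h2 : p.2 = q.2 := by rw [← hcapX2 i p hp.1, ← hcapX2 i q hq.1]; simp only at hpq; rw [hpq]
            exact Prod.ext h1 h2)
      _ = #(((A i) ×ˢ (C i)).filter (fun p => T ∩ X1 ⊆ p.1 ∧ T ∩ X2 ⊆ p.2)) := by
            rw [Finset.filter_congr hpred]
      _ = #((A i).filter (fun b => T ∩ X1 ⊆ b) ×ˢ (C i).filter (fun b => T ∩ X2 ⊆ b)) := by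
            rw [Finset.filter_product]
      _ = _ := Finset.card_product _ _
  · have hcap : ∀ i, ∀ b ∈ ((A i) ×ˢ (C i)).image (fun p => p.1 ∪ p.2), (b ∩ X1).card = i := by
      intro i b hb
      obtain ⟨p, hp, rfl⟩ := Finset.mem_image.mp hb
      rw [hcapX1 i p hp]
      exact (hA i p.1 (Finset.mem_product.mp hp).1).2
    intro i _ j _ hij
    refine Finset.disjoint_left.mpr (fun {b} hb hb' => hij ?_)
    have h1 := hcap i b (Finset.mem_filter.mp hb).1
    have h2 := hcap j b (Finset.mem_filter.mp hb').1
    omega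


lemma transport {t v k lam : ℕ} (h : SimpleDesignExists t v k lam)
    (Y : Finset ℕ) (hY : Y.card = v) :
    ∃ B : Finset (Finset ℕ), (∀ b ∈ B, b ⊆ Y ∧ b.card = k) ∧
      ∀ T ⊆ Y, T.card = t → (B.filter (fun b => T ⊆ b)).card = lam := by
  classical
  obtain ⟨X, B0, hX, hB0, hdes⟩ := h
  have hcard : X.card = Y.card := by rw [hX, hY]
  set e := Finset.equivOfCardEq hcard with he
  set f : ℕ → ℕ := fun x => if hx : x ∈ X then (e ⟨x, hx⟩ : ℕ) else x with hf
  have hfY : ∀ x ∈ X, f x ∈ Y := by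
    intro x hx
    simp only [hf, dif_pos hx]
    exact (e ⟨x, hx⟩).2
  have hinj : ∀ x ∈ X, ∀ y ∈ X, f x = f y → x = y := by
    intro x hx y hy hxy
    simp only [hf, dif_pos hx, dif_pos hy] at hxy
    have := e.injective (Subtype.ext hxy)
    exact Subtype.ext_iff.mp this
  have hsurj : ∀ y ∈ Y, ∃ x ∈ X, f x = y := by
    intro y hy
    refine ⟨(e.symm ⟨y, hy⟩ : ℕ), (e.symm ⟨y, hy⟩).2, ?_⟩
    simp only [hf, dif_pos (e.symm ⟨y, hy⟩).2]
    have : (⟨((e.symm ⟨y, hy⟩ : X) : ℕ), (e.symm ⟨y, hy⟩).2⟩ : X) = e.symm ⟨y, hy⟩ := rfl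
    rw [this, e.apply_symm_apply]
  -- image of a subset of X
  have himg_sub : ∀ b ⊆ X, b.image f ⊆ Y := fun b hb x hx => by
    obtain ⟨y, hy, rfl⟩ := Finset.mem_image.mp hx
    exact hfY y (hb hy)
  have himg_card : ∀ b ⊆ X, (b.image f).card = b.card := fun b hb =>
    Finset.card_image_of_injOn (fun x hx y hy => hinj x (hb hx) y (hb hy))
  have himg_inj : ∀ b1 ⊆ X, ∀ b2 ⊆ X, b1.image f = b2.image f → b1 = b2 := by
    intro b1 hb1 b2 hb2 h12
    ext x
    constructor
    · intro hx
      have : f x ∈ b2.image f := h12 ▸ Finset.mem_image_of_mem f hx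
      obtain ⟨y, hy, hxy⟩ := Finset.mem_image.mp this
      rwa [← hinj y (hb2 hy) x (hb1 hx) hxy]
    · intro hx
      have : f x ∈ b1.image f := h12 ▸ Finset.mem_image_of_mem f hx
      obtain ⟨y, hy, hxy⟩ := Finset.mem_image.mp this
      rwa [← hinj y (hb1 hy) x (hb2 hx) hxy]
  refine ⟨B0.image (fun b => b.image f), ?_, ?_⟩
  · intro b hb
    obtain ⟨b0, hb0, rfl⟩ := Finset.mem_image.mp hb
    exact ⟨himg_sub b0 (hB0 b0 hb0).1, (himg_card b0 (hB0 b0 hb0).1).trans (hB0 b0 hb0).2⟩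
  · intro T hTY hT
    set T' : Finset ℕ := X.filter (fun x => f x ∈ T) with hT'
    have hT'X : T' ⊆ X := Finset.filter_subset _ _
    have hT'img : T'.image f = T := by
      ext y
      simp only [Finset.mem_image, hT', Finset.mem_filter]
      constructor
      · rintro ⟨x, ⟨_, hfx⟩, rfl⟩; exact hfx
      · intro hy
        obtain ⟨x, hx, rfl⟩ := hsurj y (hTY hy)
        exact ⟨x, ⟨hx, hy⟩, rfl⟩
    have hT'card : T'.card = t := by
      rw [← hT, ← hT'img]; exact (himg_card T' hT'X).symm
    have hfilter : ((B0.image (fun b => b.image f)).filter (fun b => T ⊆ b))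
        = (B0.filter (fun b => T' ⊆ b)).image (fun b => b.image f) := by
      ext b
      simp only [Finset.mem_filter, Finset.mem_image]
      constructor
      · rintro ⟨⟨b0, hb0, rfl⟩, hTb⟩
        refine ⟨b0, ⟨hb0, fun x hx => ?_⟩, rfl⟩
        have : f x ∈ b0.image f := hTb (hT'img ▸ Finset.mem_image_of_mem f hx)
        obtain ⟨y, hy, hxy⟩ := Finset.mem_image.mp this
        rwa [← hinj y ((hB0 b0 hb0).1 hy) x (hT'X hx) hxy]
      · rintro ⟨b0, ⟨hb0, hT'b⟩, rfl⟩
        exact ⟨⟨b0, hb0, rfl⟩, hT'img ▸ Finset.image_subset_image hT'b⟩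
    rw [hfilter, Finset.card_image_of_injOn (fun b1 h1 b2 h2 =>
      himg_inj b1 (hB0 b1 (Finset.mem_filter.mp h1).1).1 b2 (hB0 b2 (Finset.mem_filter.mp h2).1).1)]
    exact hdes T' hT'X hT'card

theorem designExists_4_35_10
    (h1 : SimpleDesignExists 4 17 5 3)
    (h2 : SimpleDesignExists 4 17 6 12)
    (h3 : SimpleDesignExists 4 17 7 6)
    (h4 : SimpleDesignExists 4 17 8 85)
    (h5 : SimpleDesignExists 4 17 9 153)
    (h6 : SimpleDesignExists 4 17 10 612)
    (h7 : SimpleDesignExists 4 18 5 2)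
    (h8 : SimpleDesignExists 4 18 6 11)
    (h9 : SimpleDesignExists 4 18 7 28)
    (h10 : SimpleDesignExists 4 18 8 70)
    (h11 : SimpleDesignExists 4 18 9 238)
    (h12 : SimpleDesignExists 4 18 10 357)
    : SimpleDesignExists 4 35 10 63903 := by
  classical
  set X1 : Finset ℕ := Finset.range 17 with hX1def
  set X2 : Finset ℕ := Finset.Ico 17 35 with hX2def
  have hX1card : X1.card = 17 := by simp [hX1def]
  have hX2card : X2.card = 18 := by simp [hX2def]
  have hdisj : Disjoint X1 X2 := by
    rw [Finset.disjoint_left]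
    intro x hx hx2
    simp only [hX1def, hX2def, Finset.mem_range, Finset.mem_Ico] at hx hx2
    omega
  have hunion : X1 ∪ X2 = Finset.range 35 := by
    ext x
    simp only [hX1def, hX2def, Finset.mem_union, Finset.mem_range, Finset.mem_Ico]
    omega
  obtain ⟨D5, hD5b, hD5⟩ := transport h1 X1 hX1card
  obtain ⟨D6, hD6b, hD6⟩ := transport h2 X1 hX1card
  obtain ⟨D7, hD7b, hD7⟩ := transport h3 X1 hX1card
  obtain ⟨D8, hD8b, hD8⟩ := transport h4 X1 hX1card
  obtain ⟨D9, hD9b, hD9⟩ := transport h5 X1 hX1card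
  obtain ⟨D10, hD10b, hD10⟩ := transport h6 X1 hX1card
  obtain ⟨E5, hE5b, hE5⟩ := transport h7 X2 hX2card
  obtain ⟨E6, hE6b, hE6⟩ := transport h8 X2 hX2card
  obtain ⟨E7, hE7b, hE7⟩ := transport h9 X2 hX2card
  obtain ⟨E8, hE8b, hE8⟩ := transport h10 X2 hX2card
  obtain ⟨E9, hE9b, hE9⟩ := transport h11 X2 hX2card
  obtain ⟨E10, hE10b, hE10⟩ := transport h12 X2 hX2card
  set A : ℕ → Finset (Finset ℕ) := fun i =>
    if i = 5 then D5 else if i = 6 then D6 else if i = 7 then D7 else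
    if i = 8 then D8 else if i = 9 then D9 else if i = 10 then D10 else
    X1.powersetCard i with hAdef
  set C : ℕ → Finset (Finset ℕ) := fun i =>
    if i = 0 then E10 else if i = 1 then E9 else if i = 2 then E8 else
    if i = 3 then E7 else if i = 4 then E6 else if i = 5 then E5 else
    X2.powersetCard (10 - i) with hCdef
  have hA : ∀ i, ∀ b ∈ A i, b ⊆ X1 ∧ b.card = i := by
    intro i b hb
    simp only [hAdef] at hb
    split_ifs at hb with e1 e2 e3 e4 e5 e6
    · subst e1; exact hD5b b hb
    · subst e2; exact hD6b b hb
    · subst e3; exact hD7b b hb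
    · subst e4; exact hD8b b hb
    · subst e5; exact hD9b b hb
    · subst e6; exact hD10b b hb
    · rw [Finset.mem_powersetCard] at hb; exact hb
  have hC : ∀ i, ∀ b ∈ C i, b ⊆ X2 ∧ b.card = 10 - i := by
    intro i b hb
    simp only [hCdef] at hb
    split_ifs at hb with e1 e2 e3 e4 e5 e6
    · subst e1; exact ⟨(hE10b b hb).1, by have := (hE10b b hb).2; omega⟩
    · subst e2; exact ⟨(hE9b b hb).1, by have := (hE9b b hb).2; omega⟩
    · subst e3; exact ⟨(hE8b b hb).1, by have := (hE8b b hb).2; omega⟩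
    · subst e4; exact ⟨(hE7b b hb).1, by have := (hE7b b hb).2; omega⟩
    · subst e5; exact ⟨(hE6b b hb).1, by have := (hE6b b hb).2; omega⟩
    · subst e6; exact ⟨(hE5b b hb).1, by have := (hE5b b hb).2; omega⟩
    · rw [Finset.mem_powersetCard] at hb; exact hb
  have eA0 : A 0 = X1.powersetCard 0 := by simp [hAdef]
  have eA1 : A 1 = X1.powersetCard 1 := by simp [hAdef]
  have eA2 : A 2 = X1.powersetCard 2 := by simp [hAdef]
  have eA3 : A 3 = X1.powersetCard 3 := by simp [hAdef]
  have eA4 : A 4 = X1.powersetCard 4 := by simp [hAdef]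
  have eA5 : A 5 = D5 := by simp [hAdef]
  have eA6 : A 6 = D6 := by simp [hAdef]
  have eA7 : A 7 = D7 := by simp [hAdef]
  have eA8 : A 8 = D8 := by simp [hAdef]
  have eA9 : A 9 = D9 := by simp [hAdef]
  have eA10 : A 10 = D10 := by simp [hAdef]
  have eC0 : C 0 = E10 := by simp [hCdef]
  have eC1 : C 1 = E9 := by simp [hCdef]
  have eC2 : C 2 = E8 := by simp [hCdef]
  have eC3 : C 3 = E7 := by simp [hCdef]
  have eC4 : C 4 = E6 := by simp [hCdef]
  have eC5 : C 5 = E5 := by simp [hCdef]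
  have eC6 : C 6 = X2.powersetCard 4 := by simp [hCdef]
  have eC7 : C 7 = X2.powersetCard 3 := by simp [hCdef]
  have eC8 : C 8 = X2.powersetCard 2 := by simp [hCdef]
  have eC9 : C 9 = X2.powersetCard 1 := by simp [hCdef]
  have eC10 : C 10 = X2.powersetCard 0 := by simp [hCdef]
  refine ⟨Finset.range 35, (Finset.range (10+1)).biUnion
      (fun i => ((A i) ×ˢ (C i)).image (fun p => p.1 ∪ p.2)), by simp, ?_, ?_⟩
  · intro b hb
    simp only [Finset.mem_biUnion, Finset.mem_image, Finset.mem_product] at hb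
    obtain ⟨i, hi, ⟨b1, b2⟩, ⟨hb1, hb2⟩, rfl⟩ := hb
    rw [Finset.mem_range] at hi
    obtain ⟨hb1X, hb1c⟩ := hA i b1 hb1
    obtain ⟨hb2X, hb2c⟩ := hC i b2 hb2
    constructor
    · rw [← hunion]
      exact Finset.union_subset (hb1X.trans Finset.subset_union_left)
        (hb2X.trans Finset.subset_union_right)
    · rw [Finset.card_union_of_disjoint
        (Finset.disjoint_of_subset_left hb1X (Finset.disjoint_of_subset_right hb2X hdisj))]
      omega
  · intro T hTX hTcard
    have hTu : T ⊆ X1 ∪ X2 := by rw [hunion]; exact hTX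
    rw [combine X1 X2 hdisj 10 A C hA (fun i b hb => (hC i b hb).1) T hTu]
    have hsplit : (T ∩ X1).card + (T ∩ X2).card = 4 := by
      rw [← Finset.card_union_of_disjoint
          (Finset.disjoint_of_subset_left Finset.inter_subset_right
            (Finset.disjoint_of_subset_right Finset.inter_subset_right hdisj)),
        ← Finset.inter_union_distrib_left, Finset.inter_eq_left.mpr hTu, hTcard]
    have hjle : (T ∩ X1).card ≤ 4 := by omega
    obtain ⟨j, hjdef, hjle4⟩ : ∃ j, (T ∩ X1).card = j ∧ j ≤ 4 := ⟨_, rfl, hjle⟩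
    interval_cases j
    -- case j = 0
    · have hjd2 : (T ∩ X2).card = 4 := by omega
      have tA0 : ((X1.powersetCard 0).filter (fun S => T ∩ X1 ⊆ S)).card = 1 := by
        rw [card_filter_supset X1 (T ∩ X1) 0 Finset.inter_subset_right (by omega), hX1card, hjdef]
        decide
      have tC0 : ((E10).filter (fun S => T ∩ X2 ⊆ S)).card = 357 := by
        have h := strength X2 E10 18 10 357 hX2card hE10b hE10 4 (by omega) (by omega) (T ∩ X2) Finset.inter_subset_right hjd2
        rw [show Nat.choose (10 - 4) (4 - 4) = 1 by decide, show 357 * Nat.choose (18 - 4) (4 - 4) = 357 by decide] at h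
        omega
      have tA1 : ((X1.powersetCard 1).filter (fun S => T ∩ X1 ⊆ S)).card = 17 := by
        rw [card_filter_supset X1 (T ∩ X1) 1 Finset.inter_subset_right (by omega), hX1card, hjdef]
        decide
      have tC1 : ((E9).filter (fun S => T ∩ X2 ⊆ S)).card = 238 := by
        have h := strength X2 E9 18 9 238 hX2card hE9b hE9 4 (by omega) (by omega) (T ∩ X2) Finset.inter_subset_right hjd2
        rw [show Nat.choose (9 - 4) (4 - 4) = 1 by decide, show 238 * Nat.choose (18 - 4) (4 - 4) = 238 by decide] at h
        omega
      have tA2 : ((X1.powersetCard 2).filter (fun S => T ∩ X1 ⊆ S)).card = 136 := by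
        rw [card_filter_supset X1 (T ∩ X1) 2 Finset.inter_subset_right (by omega), hX1card, hjdef]
        decide
      have tC2 : ((E8).filter (fun S => T ∩ X2 ⊆ S)).card = 70 := by
        have h := strength X2 E8 18 8 70 hX2card hE8b hE8 4 (by omega) (by omega) (T ∩ X2) Finset.inter_subset_right hjd2
        rw [show Nat.choose (8 - 4) (4 - 4) = 1 by decide, show 70 * Nat.choose (18 - 4) (4 - 4) = 70 by decide] at h
        omega
      have tA3 : ((X1.powersetCard 3).filter (fun S => T ∩ X1 ⊆ S)).card = 680 := by
        rw [card_filter_supset X1 (T ∩ X1) 3 Finset.inter_subset_right (by omega), hX1card, hjdef]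
        decide
      have tC3 : ((E7).filter (fun S => T ∩ X2 ⊆ S)).card = 28 := by
        have h := strength X2 E7 18 7 28 hX2card hE7b hE7 4 (by omega) (by omega) (T ∩ X2) Finset.inter_subset_right hjd2
        rw [show Nat.choose (7 - 4) (4 - 4) = 1 by decide, show 28 * Nat.choose (18 - 4) (4 - 4) = 28 by decide] at h
        omega
      have tA4 : ((X1.powersetCard 4).filter (fun S => T ∩ X1 ⊆ S)).card = 2380 := by
        rw [card_filter_supset X1 (T ∩ X1) 4 Finset.inter_subset_right (by omega), hX1card, hjdef]
        decide
      have tC4 : ((E6).filter (fun S => T ∩ X2 ⊆ S)).card = 11 := by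
        have h := strength X2 E6 18 6 11 hX2card hE6b hE6 4 (by omega) (by omega) (T ∩ X2) Finset.inter_subset_right hjd2
        rw [show Nat.choose (6 - 4) (4 - 4) = 1 by decide, show 11 * Nat.choose (18 - 4) (4 - 4) = 11 by decide] at h
        omega
      have tA5 : ((D5).filter (fun S => T ∩ X1 ⊆ S)).card = 1428 := by
        have h := strength X1 D5 17 5 3 hX1card hD5b hD5 0 (by omega) (by omega) (T ∩ X1) Finset.inter_subset_right hjdef
        rw [show Nat.choose (5 - 0) (4 - 0) = 5 by decide, show 3 * Nat.choose (17 - 0) (4 - 0) = 7140 by decide] at h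
        omega
      have tC5 : ((E5).filter (fun S => T ∩ X2 ⊆ S)).card = 2 := by
        have h := strength X2 E5 18 5 2 hX2card hE5b hE5 4 (by omega) (by omega) (T ∩ X2) Finset.inter_subset_right hjd2
        rw [show Nat.choose (5 - 4) (4 - 4) = 1 by decide, show 2 * Nat.choose (18 - 4) (4 - 4) = 2 by decide] at h
        omega
      have tA6 : ((D6).filter (fun S => T ∩ X1 ⊆ S)).card = 1904 := by
        have h := strength X1 D6 17 6 12 hX1card hD6b hD6 0 (by omega) (by omega) (T ∩ X1) Finset.inter_subset_right hjdef
        rw [show Nat.choose (6 - 0) (4 - 0) = 15 by decide, show 12 * Nat.choose (17 - 0) (4 - 0) = 28560 by decide] at h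
        omega
      have tC6 : ((X2.powersetCard 4).filter (fun S => T ∩ X2 ⊆ S)).card = 1 := by
        rw [card_filter_supset X2 (T ∩ X2) 4 Finset.inter_subset_right (by omega), hX2card, hjd2]
        decide
      have tC7 : ((X2.powersetCard 3).filter (fun S => T ∩ X2 ⊆ S)).card = 0 :=
        count_zero _ 3 (fun b hb => (Finset.mem_powersetCard.mp hb).2) _ (by omega)
      have tC8 : ((X2.powersetCard 2).filter (fun S => T ∩ X2 ⊆ S)).card = 0 :=
        count_zero _ 2 (fun b hb => (Finset.mem_powersetCard.mp hb).2) _ (by omega)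
      have tC9 : ((X2.powersetCard 1).filter (fun S => T ∩ X2 ⊆ S)).card = 0 :=
        count_zero _ 1 (fun b hb => (Finset.mem_powersetCard.mp hb).2) _ (by omega)
      have tC10 : ((X2.powersetCard 0).filter (fun S => T ∩ X2 ⊆ S)).card = 0 :=
        count_zero _ 0 (fun b hb => (Finset.mem_powersetCard.mp hb).2) _ (by omega)
      simp only [Finset.sum_range_succ, Finset.sum_range_zero,
        eA0, eA1, eA2, eA3, eA4, eA5, eA6, eA7, eA8, eA9, eA10,
        eC0, eC1, eC2, eC3, eC4, eC5, eC6, eC7, eC8, eC9, eC10,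
        tA0, tC0, tA1, tC1, tA2, tC2, tA3, tC3, tA4, tC4, tA5, tC5, tA6, tC6, tC7, tC8, tC9, tC10]
      norm_num
    -- case j = 1
    · have hjd2 : (T ∩ X2).card = 3 := by omega
      have tA0 : ((X1.powersetCard 0).filter (fun S => T ∩ X1 ⊆ S)).card = 0 :=
        count_zero _ 0 (fun b hb => (Finset.mem_powersetCard.mp hb).2) _ (by omega)
      have tA1 : ((X1.powersetCard 1).filter (fun S => T ∩ X1 ⊆ S)).card = 1 := by
        rw [card_filter_supset X1 (T ∩ X1) 1 Finset.inter_subset_right (by omega), hX1card, hjdef]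
        decide
      have tC1 : ((E9).filter (fun S => T ∩ X2 ⊆ S)).card = 595 := by
        have h := strength X2 E9 18 9 238 hX2card hE9b hE9 3 (by omega) (by omega) (T ∩ X2) Finset.inter_subset_right hjd2
        rw [show Nat.choose (9 - 3) (4 - 3) = 6 by decide, show 238 * Nat.choose (18 - 3) (4 - 3) = 3570 by decide] at h
        omega
      have tA2 : ((X1.powersetCard 2).filter (fun S => T ∩ X1 ⊆ S)).card = 16 := by
        rw [card_filter_supset X1 (T ∩ X1) 2 Finset.inter_subset_right (by omega), hX1card, hjdef]
        decide
      have tC2 : ((E8).filter (fun S => T ∩ X2 ⊆ S)).card = 210 := by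
        have h := strength X2 E8 18 8 70 hX2card hE8b hE8 3 (by omega) (by omega) (T ∩ X2) Finset.inter_subset_right hjd2
        rw [show Nat.choose (8 - 3) (4 - 3) = 5 by decide, show 70 * Nat.choose (18 - 3) (4 - 3) = 1050 by decide] at h
        omega
      have tA3 : ((X1.powersetCard 3).filter (fun S => T ∩ X1 ⊆ S)).card = 120 := by
        rw [card_filter_supset X1 (T ∩ X1) 3 Finset.inter_subset_right (by omega), hX1card, hjdef]
        decide
      have tC3 : ((E7).filter (fun S => T ∩ X2 ⊆ S)).card = 105 := by
        have h := strength X2 E7 18 7 28 hX2card hE7b hE7 3 (by omega) (by omega) (T ∩ X2) Finset.inter_subset_right hjd2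
        rw [show Nat.choose (7 - 3) (4 - 3) = 4 by decide, show 28 * Nat.choose (18 - 3) (4 - 3) = 420 by decide] at h
        omega
      have tA4 : ((X1.powersetCard 4).filter (fun S => T ∩ X1 ⊆ S)).card = 560 := by
        rw [card_filter_supset X1 (T ∩ X1) 4 Finset.inter_subset_right (by omega), hX1card, hjdef]
        decide
      have tC4 : ((E6).filter (fun S => T ∩ X2 ⊆ S)).card = 55 := by
        have h := strength X2 E6 18 6 11 hX2card hE6b hE6 3 (by omega) (by omega) (T ∩ X2) Finset.inter_subset_right hjd2
        rw [show Nat.choose (6 - 3) (4 - 3) = 3 by decide, show 11 * Nat.choose (18 - 3) (4 - 3) = 165 by decide] at h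
        omega
      have tA5 : ((D5).filter (fun S => T ∩ X1 ⊆ S)).card = 420 := by
        have h := strength X1 D5 17 5 3 hX1card hD5b hD5 1 (by omega) (by omega) (T ∩ X1) Finset.inter_subset_right hjdef
        rw [show Nat.choose (5 - 1) (4 - 1) = 4 by decide, show 3 * Nat.choose (17 - 1) (4 - 1) = 1680 by decide] at h
        omega
      have tC5 : ((E5).filter (fun S => T ∩ X2 ⊆ S)).card = 15 := by
        have h := strength X2 E5 18 5 2 hX2card hE5b hE5 3 (by omega) (by omega) (T ∩ X2) Finset.inter_subset_right hjd2
        rw [show Nat.choose (5 - 3) (4 - 3) = 2 by decide, show 2 * Nat.choose (18 - 3) (4 - 3) = 30 by decide] at h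
        omega
      have tA6 : ((D6).filter (fun S => T ∩ X1 ⊆ S)).card = 672 := by
        have h := strength X1 D6 17 6 12 hX1card hD6b hD6 1 (by omega) (by omega) (T ∩ X1) Finset.inter_subset_right hjdef
        rw [show Nat.choose (6 - 1) (4 - 1) = 10 by decide, show 12 * Nat.choose (17 - 1) (4 - 1) = 6720 by decide] at h
        omega
      have tC6 : ((X2.powersetCard 4).filter (fun S => T ∩ X2 ⊆ S)).card = 15 := by
        rw [card_filter_supset X2 (T ∩ X2) 4 Finset.inter_subset_right (by omega), hX2card, hjd2]
        decide
      have tA7 : ((D7).filter (fun S => T ∩ X1 ⊆ S)).card = 168 := by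
        have h := strength X1 D7 17 7 6 hX1card hD7b hD7 1 (by omega) (by omega) (T ∩ X1) Finset.inter_subset_right hjdef
        rw [show Nat.choose (7 - 1) (4 - 1) = 20 by decide, show 6 * Nat.choose (17 - 1) (4 - 1) = 3360 by decide] at h
        omega
      have tC7 : ((X2.powersetCard 3).filter (fun S => T ∩ X2 ⊆ S)).card = 1 := by
        rw [card_filter_supset X2 (T ∩ X2) 3 Finset.inter_subset_right (by omega), hX2card, hjd2]
        decide
      have tC8 : ((X2.powersetCard 2).filter (fun S => T ∩ X2 ⊆ S)).card = 0 :=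
        count_zero _ 2 (fun b hb => (Finset.mem_powersetCard.mp hb).2) _ (by omega)
      have tC9 : ((X2.powersetCard 1).filter (fun S => T ∩ X2 ⊆ S)).card = 0 :=
        count_zero _ 1 (fun b hb => (Finset.mem_powersetCard.mp hb).2) _ (by omega)
      have tC10 : ((X2.powersetCard 0).filter (fun S => T ∩ X2 ⊆ S)).card = 0 :=
        count_zero _ 0 (fun b hb => (Finset.mem_powersetCard.mp hb).2) _ (by omega)
      simp only [Finset.sum_range_succ, Finset.sum_range_zero,
        eA0, eA1, eA2, eA3, eA4, eA5, eA6, eA7, eA8, eA9, eA10,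
        eC0, eC1, eC2, eC3, eC4, eC5, eC6, eC7, eC8, eC9, eC10,
        tA0, tA1, tC1, tA2, tC2, tA3, tC3, tA4, tC4, tA5, tC5, tA6, tC6, tA7, tC7, tC8, tC9, tC10]
      norm_num
    -- case j = 2
    · have hjd2 : (T ∩ X2).card = 2 := by omega
      have tA0 : ((X1.powersetCard 0).filter (fun S => T ∩ X1 ⊆ S)).card = 0 :=
        count_zero _ 0 (fun b hb => (Finset.mem_powersetCard.mp hb).2) _ (by omega)
      have tA1 : ((X1.powersetCard 1).filter (fun S => T ∩ X1 ⊆ S)).card = 0 :=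
        count_zero _ 1 (fun b hb => (Finset.mem_powersetCard.mp hb).2) _ (by omega)
      have tA2 : ((X1.powersetCard 2).filter (fun S => T ∩ X1 ⊆ S)).card = 1 := by
        rw [card_filter_supset X1 (T ∩ X1) 2 Finset.inter_subset_right (by omega), hX1card, hjdef]
        decide
      have tC2 : ((E8).filter (fun S => T ∩ X2 ⊆ S)).card = 560 := by
        have h := strength X2 E8 18 8 70 hX2card hE8b hE8 2 (by omega) (by omega) (T ∩ X2) Finset.inter_subset_right hjd2
        rw [show Nat.choose (8 - 2) (4 - 2) = 15 by decide, show 70 * Nat.choose (18 - 2) (4 - 2) = 8400 by decide] at h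
        omega
      have tA3 : ((X1.powersetCard 3).filter (fun S => T ∩ X1 ⊆ S)).card = 15 := by
        rw [card_filter_supset X1 (T ∩ X1) 3 Finset.inter_subset_right (by omega), hX1card, hjdef]
        decide
      have tC3 : ((E7).filter (fun S => T ∩ X2 ⊆ S)).card = 336 := by
        have h := strength X2 E7 18 7 28 hX2card hE7b hE7 2 (by omega) (by omega) (T ∩ X2) Finset.inter_subset_right hjd2
        rw [show Nat.choose (7 - 2) (4 - 2) = 10 by decide, show 28 * Nat.choose (18 - 2) (4 - 2) = 3360 by decide] at h
        omega
      have tA4 : ((X1.powersetCard 4).filter (fun S => T ∩ X1 ⊆ S)).card = 105 := by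
        rw [card_filter_supset X1 (T ∩ X1) 4 Finset.inter_subset_right (by omega), hX1card, hjdef]
        decide
      have tC4 : ((E6).filter (fun S => T ∩ X2 ⊆ S)).card = 220 := by
        have h := strength X2 E6 18 6 11 hX2card hE6b hE6 2 (by omega) (by omega) (T ∩ X2) Finset.inter_subset_right hjd2
        rw [show Nat.choose (6 - 2) (4 - 2) = 6 by decide, show 11 * Nat.choose (18 - 2) (4 - 2) = 1320 by decide] at h
        omega
      have tA5 : ((D5).filter (fun S => T ∩ X1 ⊆ S)).card = 105 := by
        have h := strength X1 D5 17 5 3 hX1card hD5b hD5 2 (by omega) (by omega) (T ∩ X1) Finset.inter_subset_right hjdef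
        rw [show Nat.choose (5 - 2) (4 - 2) = 3 by decide, show 3 * Nat.choose (17 - 2) (4 - 2) = 315 by decide] at h
        omega
      have tC5 : ((E5).filter (fun S => T ∩ X2 ⊆ S)).card = 80 := by
        have h := strength X2 E5 18 5 2 hX2card hE5b hE5 2 (by omega) (by omega) (T ∩ X2) Finset.inter_subset_right hjd2
        rw [show Nat.choose (5 - 2) (4 - 2) = 3 by decide, show 2 * Nat.choose (18 - 2) (4 - 2) = 240 by decide] at h
        omega
      have tA6 : ((D6).filter (fun S => T ∩ X1 ⊆ S)).card = 210 := by
        have h := strength X1 D6 17 6 12 hX1card hD6b hD6 2 (by omega) (by omega) (T ∩ X1) Finset.inter_subset_right hjdef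
        rw [show Nat.choose (6 - 2) (4 - 2) = 6 by decide, show 12 * Nat.choose (17 - 2) (4 - 2) = 1260 by decide] at h
        omega
      have tC6 : ((X2.powersetCard 4).filter (fun S => T ∩ X2 ⊆ S)).card = 120 := by
        rw [card_filter_supset X2 (T ∩ X2) 4 Finset.inter_subset_right (by omega), hX2card, hjd2]
        decide
      have tA7 : ((D7).filter (fun S => T ∩ X1 ⊆ S)).card = 63 := by
        have h := strength X1 D7 17 7 6 hX1card hD7b hD7 2 (by omega) (by omega) (T ∩ X1) Finset.inter_subset_right hjdef
        rw [show Nat.choose (7 - 2) (4 - 2) = 10 by decide, show 6 * Nat.choose (17 - 2) (4 - 2) = 630 by decide] at h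
        omega
      have tC7 : ((X2.powersetCard 3).filter (fun S => T ∩ X2 ⊆ S)).card = 16 := by
        rw [card_filter_supset X2 (T ∩ X2) 3 Finset.inter_subset_right (by omega), hX2card, hjd2]
        decide
      have tA8 : ((D8).filter (fun S => T ∩ X1 ⊆ S)).card = 595 := by
        have h := strength X1 D8 17 8 85 hX1card hD8b hD8 2 (by omega) (by omega) (T ∩ X1) Finset.inter_subset_right hjdef
        rw [show Nat.choose (8 - 2) (4 - 2) = 15 by decide, show 85 * Nat.choose (17 - 2) (4 - 2) = 8925 by decide] at h
        omega
      have tC8 : ((X2.powersetCard 2).filter (fun S => T ∩ X2 ⊆ S)).card = 1 := by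
        rw [card_filter_supset X2 (T ∩ X2) 2 Finset.inter_subset_right (by omega), hX2card, hjd2]
        decide
      have tC9 : ((X2.powersetCard 1).filter (fun S => T ∩ X2 ⊆ S)).card = 0 :=
        count_zero _ 1 (fun b hb => (Finset.mem_powersetCard.mp hb).2) _ (by omega)
      have tC10 : ((X2.powersetCard 0).filter (fun S => T ∩ X2 ⊆ S)).card = 0 :=
        count_zero _ 0 (fun b hb => (Finset.mem_powersetCard.mp hb).2) _ (by omega)
      simp only [Finset.sum_range_succ, Finset.sum_range_zero,
        eA0, eA1, eA2, eA3, eA4, eA5, eA6, eA7, eA8, eA9, eA10,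
        eC0, eC1, eC2, eC3, eC4, eC5, eC6, eC7, eC8, eC9, eC10,
        tA0, tA1, tA2, tC2, tA3, tC3, tA4, tC4, tA5, tC5, tA6, tC6, tA7, tC7, tA8, tC8, tC9, tC10]
      norm_num
    -- case j = 3
    · have hjd2 : (T ∩ X2).card = 1 := by omega
      have tA0 : ((X1.powersetCard 0).filter (fun S => T ∩ X1 ⊆ S)).card = 0 :=
        count_zero _ 0 (fun b hb => (Finset.mem_powersetCard.mp hb).2) _ (by omega)
      have tA1 : ((X1.powersetCard 1).filter (fun S => T ∩ X1 ⊆ S)).card = 0 :=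
        count_zero _ 1 (fun b hb => (Finset.mem_powersetCard.mp hb).2) _ (by omega)
      have tA2 : ((X1.powersetCard 2).filter (fun S => T ∩ X1 ⊆ S)).card = 0 :=
        count_zero _ 2 (fun b hb => (Finset.mem_powersetCard.mp hb).2) _ (by omega)
      have tA3 : ((X1.powersetCard 3).filter (fun S => T ∩ X1 ⊆ S)).card = 1 := by
        rw [card_filter_supset X1 (T ∩ X1) 3 Finset.inter_subset_right (by omega), hX1card, hjdef]
        decide
      have tC3 : ((E7).filter (fun S => T ∩ X2 ⊆ S)).card = 952 := by
        have h := strength X2 E7 18 7 28 hX2card hE7b hE7 1 (by omega) (by omega) (T ∩ X2) Finset.inter_subset_right hjd2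
        rw [show Nat.choose (7 - 1) (4 - 1) = 20 by decide, show 28 * Nat.choose (18 - 1) (4 - 1) = 19040 by decide] at h
        omega
      have tA4 : ((X1.powersetCard 4).filter (fun S => T ∩ X1 ⊆ S)).card = 14 := by
        rw [card_filter_supset X1 (T ∩ X1) 4 Finset.inter_subset_right (by omega), hX1card, hjdef]
        decide
      have tC4 : ((E6).filter (fun S => T ∩ X2 ⊆ S)).card = 748 := by
        have h := strength X2 E6 18 6 11 hX2card hE6b hE6 1 (by omega) (by omega) (T ∩ X2) Finset.inter_subset_right hjd2
        rw [show Nat.choose (6 - 1) (4 - 1) = 10 by decide, show 11 * Nat.choose (18 - 1) (4 - 1) = 7480 by decide] at h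
        omega
      have tA5 : ((D5).filter (fun S => T ∩ X1 ⊆ S)).card = 21 := by
        have h := strength X1 D5 17 5 3 hX1card hD5b hD5 3 (by omega) (by omega) (T ∩ X1) Finset.inter_subset_right hjdef
        rw [show Nat.choose (5 - 3) (4 - 3) = 2 by decide, show 3 * Nat.choose (17 - 3) (4 - 3) = 42 by decide] at h
        omega
      have tC5 : ((E5).filter (fun S => T ∩ X2 ⊆ S)).card = 340 := by
        have h := strength X2 E5 18 5 2 hX2card hE5b hE5 1 (by omega) (by omega) (T ∩ X2) Finset.inter_subset_right hjd2
        rw [show Nat.choose (5 - 1) (4 - 1) = 4 by decide, show 2 * Nat.choose (18 - 1) (4 - 1) = 1360 by decide] at h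
        omega
      have tA6 : ((D6).filter (fun S => T ∩ X1 ⊆ S)).card = 56 := by
        have h := strength X1 D6 17 6 12 hX1card hD6b hD6 3 (by omega) (by omega) (T ∩ X1) Finset.inter_subset_right hjdef
        rw [show Nat.choose (6 - 3) (4 - 3) = 3 by decide, show 12 * Nat.choose (17 - 3) (4 - 3) = 168 by decide] at h
        omega
      have tC6 : ((X2.powersetCard 4).filter (fun S => T ∩ X2 ⊆ S)).card = 680 := by
        rw [card_filter_supset X2 (T ∩ X2) 4 Finset.inter_subset_right (by omega), hX2card, hjd2]
        decide
      have tA7 : ((D7).filter (fun S => T ∩ X1 ⊆ S)).card = 21 := by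
        have h := strength X1 D7 17 7 6 hX1card hD7b hD7 3 (by omega) (by omega) (T ∩ X1) Finset.inter_subset_right hjdef
        rw [show Nat.choose (7 - 3) (4 - 3) = 4 by decide, show 6 * Nat.choose (17 - 3) (4 - 3) = 84 by decide] at h
        omega
      have tC7 : ((X2.powersetCard 3).filter (fun S => T ∩ X2 ⊆ S)).card = 136 := by
        rw [card_filter_supset X2 (T ∩ X2) 3 Finset.inter_subset_right (by omega), hX2card, hjd2]
        decide
      have tA8 : ((D8).filter (fun S => T ∩ X1 ⊆ S)).card = 238 := by
        have h := strength X1 D8 17 8 85 hX1card hD8b hD8 3 (by omega) (by omega) (T ∩ X1) Finset.inter_subset_right hjdef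
        rw [show Nat.choose (8 - 3) (4 - 3) = 5 by decide, show 85 * Nat.choose (17 - 3) (4 - 3) = 1190 by decide] at h
        omega
      have tC8 : ((X2.powersetCard 2).filter (fun S => T ∩ X2 ⊆ S)).card = 17 := by
        rw [card_filter_supset X2 (T ∩ X2) 2 Finset.inter_subset_right (by omega), hX2card, hjd2]
        decide
      have tA9 : ((D9).filter (fun S => T ∩ X1 ⊆ S)).card = 357 := by
        have h := strength X1 D9 17 9 153 hX1card hD9b hD9 3 (by omega) (by omega) (T ∩ X1) Finset.inter_subset_right hjdef
        rw [show Nat.choose (9 - 3) (4 - 3) = 6 by decide, show 153 * Nat.choose (17 - 3) (4 - 3) = 2142 by decide] at h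
        omega
      have tC9 : ((X2.powersetCard 1).filter (fun S => T ∩ X2 ⊆ S)).card = 1 := by
        rw [card_filter_supset X2 (T ∩ X2) 1 Finset.inter_subset_right (by omega), hX2card, hjd2]
        decide
      have tC10 : ((X2.powersetCard 0).filter (fun S => T ∩ X2 ⊆ S)).card = 0 :=
        count_zero _ 0 (fun b hb => (Finset.mem_powersetCard.mp hb).2) _ (by omega)
      simp only [Finset.sum_range_succ, Finset.sum_range_zero,
        eA0, eA1, eA2, eA3, eA4, eA5, eA6, eA7, eA8, eA9, eA10,
        eC0, eC1, eC2, eC3, eC4, eC5, eC6, eC7, eC8, eC9, eC10,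
        tA0, tA1, tA2, tA3, tC3, tA4, tC4, tA5, tC5, tA6, tC6, tA7, tC7, tA8, tC8, tA9, tC9, tC10]
      norm_num
    -- case j = 4
    · have hjd2 : (T ∩ X2).card = 0 := by omega
      have tA0 : ((X1.powersetCard 0).filter (fun S => T ∩ X1 ⊆ S)).card = 0 :=
        count_zero _ 0 (fun b hb => (Finset.mem_powersetCard.mp hb).2) _ (by omega)
      have tA1 : ((X1.powersetCard 1).filter (fun S => T ∩ X1 ⊆ S)).card = 0 :=
        count_zero _ 1 (fun b hb => (Finset.mem_powersetCard.mp hb).2) _ (by omega)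
      have tA2 : ((X1.powersetCard 2).filter (fun S => T ∩ X1 ⊆ S)).card = 0 :=
        count_zero _ 2 (fun b hb => (Finset.mem_powersetCard.mp hb).2) _ (by omega)
      have tA3 : ((X1.powersetCard 3).filter (fun S => T ∩ X1 ⊆ S)).card = 0 :=
        count_zero _ 3 (fun b hb => (Finset.mem_powersetCard.mp hb).2) _ (by omega)
      have tA4 : ((X1.powersetCard 4).filter (fun S => T ∩ X1 ⊆ S)).card = 1 := by
        rw [card_filter_supset X1 (T ∩ X1) 4 Finset.inter_subset_right (by omega), hX1card, hjdef]
        decide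
      have tC4 : ((E6).filter (fun S => T ∩ X2 ⊆ S)).card = 2244 := by
        have h := strength X2 E6 18 6 11 hX2card hE6b hE6 0 (by omega) (by omega) (T ∩ X2) Finset.inter_subset_right hjd2
        rw [show Nat.choose (6 - 0) (4 - 0) = 15 by decide, show 11 * Nat.choose (18 - 0) (4 - 0) = 33660 by decide] at h
        omega
      have tA5 : ((D5).filter (fun S => T ∩ X1 ⊆ S)).card = 3 := by
        have h := strength X1 D5 17 5 3 hX1card hD5b hD5 4 (by omega) (by omega) (T ∩ X1) Finset.inter_subset_right hjdef
        rw [show Nat.choose (5 - 4) (4 - 4) = 1 by decide, show 3 * Nat.choose (17 - 4) (4 - 4) = 3 by decide] at h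
        omega
      have tC5 : ((E5).filter (fun S => T ∩ X2 ⊆ S)).card = 1224 := by
        have h := strength X2 E5 18 5 2 hX2card hE5b hE5 0 (by omega) (by omega) (T ∩ X2) Finset.inter_subset_right hjd2
        rw [show Nat.choose (5 - 0) (4 - 0) = 5 by decide, show 2 * Nat.choose (18 - 0) (4 - 0) = 6120 by decide] at h
        omega
      have tA6 : ((D6).filter (fun S => T ∩ X1 ⊆ S)).card = 12 := by
        have h := strength X1 D6 17 6 12 hX1card hD6b hD6 4 (by omega) (by omega) (T ∩ X1) Finset.inter_subset_right hjdef
        rw [show Nat.choose (6 - 4) (4 - 4) = 1 by decide, show 12 * Nat.choose (17 - 4) (4 - 4) = 12 by decide] at h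
        omega
      have tC6 : ((X2.powersetCard 4).filter (fun S => T ∩ X2 ⊆ S)).card = 3060 := by
        rw [card_filter_supset X2 (T ∩ X2) 4 Finset.inter_subset_right (by omega), hX2card, hjd2]
        decide
      have tA7 : ((D7).filter (fun S => T ∩ X1 ⊆ S)).card = 6 := by
        have h := strength X1 D7 17 7 6 hX1card hD7b hD7 4 (by omega) (by omega) (T ∩ X1) Finset.inter_subset_right hjdef
        rw [show Nat.choose (7 - 4) (4 - 4) = 1 by decide, show 6 * Nat.choose (17 - 4) (4 - 4) = 6 by decide] at h
        omega
      have tC7 : ((X2.powersetCard 3).filter (fun S => T ∩ X2 ⊆ S)).card = 816 := by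
        rw [card_filter_supset X2 (T ∩ X2) 3 Finset.inter_subset_right (by omega), hX2card, hjd2]
        decide
      have tA8 : ((D8).filter (fun S => T ∩ X1 ⊆ S)).card = 85 := by
        have h := strength X1 D8 17 8 85 hX1card hD8b hD8 4 (by omega) (by omega) (T ∩ X1) Finset.inter_subset_right hjdef
        rw [show Nat.choose (8 - 4) (4 - 4) = 1 by decide, show 85 * Nat.choose (17 - 4) (4 - 4) = 85 by decide] at h
        omega
      have tC8 : ((X2.powersetCard 2).filter (fun S => T ∩ X2 ⊆ S)).card = 153 := by
        rw [card_filter_supset X2 (T ∩ X2) 2 Finset.inter_subset_right (by omega), hX2card, hjd2]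
        decide
      have tA9 : ((D9).filter (fun S => T ∩ X1 ⊆ S)).card = 153 := by
        have h := strength X1 D9 17 9 153 hX1card hD9b hD9 4 (by omega) (by omega) (T ∩ X1) Finset.inter_subset_right hjdef
        rw [show Nat.choose (9 - 4) (4 - 4) = 1 by decide, show 153 * Nat.choose (17 - 4) (4 - 4) = 153 by decide] at h
        omega
      have tC9 : ((X2.powersetCard 1).filter (fun S => T ∩ X2 ⊆ S)).card = 18 := by
        rw [card_filter_supset X2 (T ∩ X2) 1 Finset.inter_subset_right (by omega), hX2card, hjd2]
        decide
      have tA10 : ((D10).filter (fun S => T ∩ X1 ⊆ S)).card = 612 := by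
        have h := strength X1 D10 17 10 612 hX1card hD10b hD10 4 (by omega) (by omega) (T ∩ X1) Finset.inter_subset_right hjdef
        rw [show Nat.choose (10 - 4) (4 - 4) = 1 by decide, show 612 * Nat.choose (17 - 4) (4 - 4) = 612 by decide] at h
        omega
      have tC10 : ((X2.powersetCard 0).filter (fun S => T ∩ X2 ⊆ S)).card = 1 := by
        rw [card_filter_supset X2 (T ∩ X2) 0 Finset.inter_subset_right (by omega), hX2card, hjd2]
        decide
      simp only [Finset.sum_range_succ, Finset.sum_range_zero,
        eA0, eA1, eA2, eA3, eA4, eA5, eA6, eA7, eA8, eA9, eA10,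
        eC0, eC1, eC2, eC3, eC4, eC5, eC6, eC7, eC8, eC9, eC10,
        tA0, tA1, tA2, tA3, tA4, tC4, tA5, tC5, tA6, tC6, tA7, tC7, tA8, tC8, tA9, tC9, tA10, tC10]
      norm_num
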